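/- For every positive integer m ≥ 2, the m-fold integral over the unit cube (0,1)^m of 1/(1 + x₁x₂⋯x_m) equals (1 − 2^{1−m})·ζ(m). -/

import Mathlib

open MeasureTheory Set

namespace CubeIntegralEta

lemma integral_Ioo_pow (n : ℕ) : ∫ x in Ioo (0:ℝ) 1, x ^ n = 1 / ((n:ℝ) + 1) := by
  rw [← integral_Ioc_eq_integral_Ioo, ← intervalIntegral.integral_of_le zero_le_one,
    integral_pow]
  simp

lemma indicator_pi_prod (m : ℕ) (f : ℝ → ℝ) (hf0 : ∀ t, t ∉ Ioo (0:ℝ) 1 → True) (x : Fin m → ℝ) :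
    (Set.univ.pi fun _ : Fin m => Ioo (0:ℝ) 1).indicator (fun x => ∏ i, f (x i)) x
      = ∏ i, (Ioo (0:ℝ) 1).indicator f (x i) := by
  by_cases hx : x ∈ Set.univ.pi fun _ : Fin m => Ioo (0:ℝ) 1
  · rw [Set.indicator_of_mem hx]
    refine Finset.prod_congr rfl fun i _ => ?_
    rw [Set.indicator_of_mem (hx i (Set.mem_univ i))]
  · rw [Set.indicator_of_notMem hx]
    obtain ⟨j, hj⟩ : ∃ j, x j ∉ Ioo (0:ℝ) 1 := by
      by_contra h; push_neg at h; exact hx fun i _ => h i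
    exact (Finset.prod_eq_zero (Finset.mem_univ j)
      (by rw [Set.indicator_of_notMem hj])).symm

lemma integral_mono_pow (m n : ℕ) :
    ∫ x : Fin m → ℝ in Set.univ.pi (fun _ => Ioo (0:ℝ) 1), (∏ i, x i) ^ n
      = (1 / ((n:ℝ) + 1)) ^ m := by
  have hcube : MeasurableSet (Set.univ.pi fun _ : Fin m => Ioo (0:ℝ) 1) :=
    MeasurableSet.univ_pi fun _ => measurableSet_Ioo
  rw [← integral_indicator hcube]
  have h1 : ∀ x : Fin m → ℝ,
      (Set.univ.pi fun _ : Fin m => Ioo (0:ℝ) 1).indicator (fun x => (∏ i, x i) ^ n) x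
        = ∏ i, (Ioo (0:ℝ) 1).indicator (fun t => t ^ n) (x i) := by
    intro x
    rw [show (fun x : Fin m → ℝ => (∏ i, x i) ^ n) = fun x => ∏ i, (x i) ^ n by
      funext x; rw [Finset.prod_pow]]
    exact indicator_pi_prod m (fun t => t ^ n) (fun _ _ => trivial) x
  simp_rw [h1]
  rw [MeasureTheory.integral_fintype_prod_volume_eq_prod
    (fun _ => (Ioo (0:ℝ) 1).indicator (fun t => t ^ n))]
  simp_rw [integral_indicator measurableSet_Ioo, integral_Ioo_pow, Finset.prod_const,
    Finset.card_univ, Fintype.card_fin]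

lemma integrableOn_mono_pow (m n : ℕ) :
    IntegrableOn (fun x : Fin m → ℝ => (∏ i, x i) ^ n)
      (Set.univ.pi fun _ => Ioo (0:ℝ) 1) := by
  have hcube : MeasurableSet (Set.univ.pi fun _ : Fin m => Ioo (0:ℝ) 1) :=
    MeasurableSet.univ_pi fun _ => measurableSet_Ioo
  have hvol : volume (Set.univ.pi fun _ : Fin m => Ioo (0:ℝ) 1) = 1 := by
    rw [volume_pi_pi]
    simp
  have : IsFiniteMeasure (volume.restrict (Set.univ.pi fun _ : Fin m => Ioo (0:ℝ) 1)) := by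
    constructor
    rw [Measure.restrict_apply_univ, hvol]
    exact ENNReal.one_lt_top
  refine Integrable.mono' (integrable_const 1)
    ((Finset.measurable_prod Finset.univ (fun i _ => measurable_pi_apply i)).pow_const
      n).aestronglyMeasurable ?_
  filter_upwards [ae_restrict_mem hcube] with x hx
  have h0 : 0 < ∏ i, x i := Finset.prod_pos fun i _ => (hx i (Set.mem_univ i)).1
  have h1 : ∏ i, x i ≤ 1 :=
    Finset.prod_le_one (fun i _ => (hx i (Set.mem_univ i)).1.le)
      (fun i _ => (hx i (Set.mem_univ i)).2.le)
  rw [Real.norm_eq_abs, abs_of_nonneg (pow_nonneg h0.le n)]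
  exact pow_le_one₀ h0.le h1

lemma geom_series (t : ℝ) (ht0 : 0 < t) (ht1 : t < 1) :
    ∑' n : ℕ, (t ^ (2 * n) - t ^ (2 * n + 1)) = 1 / (1 + t) := by
  have h2 : t ^ 2 < 1 := by nlinarith
  have hg : ∑' n : ℕ, (t ^ 2) ^ n = (1 - t ^ 2)⁻¹ :=
    tsum_geometric_of_lt_one (by positivity) h2
  have : ∀ n : ℕ, t ^ (2 * n) - t ^ (2 * n + 1) = (t ^ 2) ^ n * (1 - t) := by
    intro n
    rw [pow_add, pow_mul, pow_one]
    ring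
  simp_rw [this]
  rw [tsum_mul_right, hg]
  have h1t : 1 - t ^ 2 ≠ 0 := by nlinarith
  field_simp
  ring

lemma summable_aux (m : ℕ) (hm : 2 ≤ m) : Summable (fun n : ℕ => 1 / ((n:ℝ) + 1) ^ m) := by
  have h : Summable (fun n : ℕ => 1 / (n:ℝ) ^ m) := Real.summable_one_div_nat_pow.mpr hm
  have := (summable_nat_add_iff 1).mpr h
  refine this.congr fun n => ?_
  push_cast
  ring_nf

theorem main (m : ℕ) (hm : 2 ≤ m) :
    (∫ x : Fin m → ℝ in Set.univ.pi (fun _ => Set.Ioo (0:ℝ) 1),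
      1 / (1 + ∏ i, x i))
    = (1 - 2 ^ ((1:ℝ) - m)) * ∑' n : ℕ, 1 / ((n:ℝ) + 1) ^ m := by
  have hcube : MeasurableSet (Set.univ.pi fun _ : Fin m => Ioo (0:ℝ) 1) :=
    MeasurableSet.univ_pi fun _ => measurableSet_Ioo
  set μ := volume.restrict (Set.univ.pi fun _ : Fin m => Ioo (0:ℝ) 1) with hμ
  set f : ℕ → (Fin m → ℝ) → ℝ :=
    fun n x => (∏ i, x i) ^ (2 * n) - (∏ i, x i) ^ (2 * n + 1) with hf
  have hprodmem : ∀ x ∈ Set.univ.pi fun _ : Fin m => Ioo (0:ℝ) 1,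
      0 < ∏ i, x i ∧ ∏ i, x i < 1 := by
    intro x hx
    refine ⟨Finset.prod_pos fun i _ => (hx i (Set.mem_univ i)).1, ?_⟩
    have : (⟨0, by omega⟩ : Fin m) ∈ Finset.univ := Finset.mem_univ _
    calc ∏ i, x i < ∏ _i : Fin m, 1 := by
          refine Finset.prod_lt_prod_of_nonempty ?_ ?_ ?_
          · exact fun i _ => (hx i (Set.mem_univ i)).1
          · exact fun i _ => (hx i (Set.mem_univ i)).2
          · exact ⟨⟨0, by omega⟩, Finset.mem_univ _⟩
      _ = 1 := Finset.prod_const_one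
  -- integrability & nonnegativity of f n on the cube
  have hfnn : ∀ n : ℕ, 0 ≤ᵐ[μ] f n := by
    intro n
    filter_upwards [ae_restrict_mem hcube] with x hx
    obtain ⟨h0, h1⟩ := hprodmem x hx
    simp only [hf, Pi.zero_apply, sub_nonneg, pow_succ]
    calc (∏ i, x i) ^ (2*n) * ∏ i, x i ≤ (∏ i, x i) ^ (2*n) * 1 := by
          exact mul_le_mul_of_nonneg_left h1.le (pow_nonneg h0.le _)
      _ = (∏ i, x i) ^ (2*n) := mul_one _
  have hfmeas : ∀ n : ℕ, AEStronglyMeasurable (f n) μ := by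
    intro n
    exact (((Finset.measurable_prod Finset.univ fun i _ =>
      measurable_pi_apply i).pow_const (2*n)).sub
      ((Finset.measurable_prod Finset.univ fun i _ =>
        measurable_pi_apply i).pow_const (2*n+1))).aestronglyMeasurable
  have hfint : ∀ n : ℕ, Integrable (f n) μ :=
    fun n => (integrableOn_mono_pow m (2*n)).sub (integrableOn_mono_pow m (2*n+1))
  have hfval : ∀ n : ℕ, ∫ x, f n x ∂μ
      = (1 / ((2*n:ℕ) + 1 : ℝ)) ^ m - (1 / ((2*n+1:ℕ) + 1 : ℝ)) ^ m := by
    intro n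
    rw [hf]
    rw [integral_sub (integrableOn_mono_pow m (2*n)) (integrableOn_mono_pow m (2*n+1))]
    rw [integral_mono_pow m (2*n), integral_mono_pow m (2*n+1)]
  -- summability of the values
  have hS : Summable (fun n : ℕ => 1 / ((n:ℝ) + 1) ^ m) := summable_aux m hm
  have hSe : Summable (fun k : ℕ => 1 / ((2*k:ℝ) + 1) ^ m) := by
    have := hS.comp_injective (fun a b h => by simp only at h; omega : Function.Injective (fun k : ℕ => 2*k))
    refine this.congr fun k => ?_
    simp only [Function.comp_apply]
    (try push_cast)
    (try ring_nf)
  have hSo : Summable (fun k : ℕ => 1 / ((2*k:ℝ) + 2) ^ m) := by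
    have := hS.comp_injective
      (fun a b h => by simp only at h; omega : Function.Injective (fun k : ℕ => 2*k+1))
    refine this.congr fun k => ?_
    simp only [Function.comp_apply]
    (try push_cast)
    (try ring_nf)
  have hval_nonneg : ∀ n : ℕ,
      0 ≤ (1 / ((2*n:ℕ) + 1 : ℝ)) ^ m - (1 / ((2*n+1:ℕ) + 1 : ℝ)) ^ m := by
    intro n
    have h1 : (0:ℝ) < (2*n:ℕ) + 1 := by positivity
    have h2 : ((2*n:ℕ) + 1 : ℝ) ≤ ((2*n+1:ℕ) + 1 : ℝ) := by push_cast; linarith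
    have := one_div_le_one_div_of_le h1 h2
    exact sub_nonneg.mpr (pow_le_pow_left₀ (by positivity) this m)
  have hvalsummable : Summable (fun n : ℕ =>
      (1 / ((2*n:ℕ) + 1 : ℝ)) ^ m - (1 / ((2*n+1:ℕ) + 1 : ℝ)) ^ m) := by
    have h1 : Summable (fun n : ℕ => (1 / ((2*n:ℕ) + 1 : ℝ)) ^ m) := by
      refine hSe.congr fun k => ?_; push_cast; rw [one_div_pow]
    have h2 : Summable (fun n : ℕ => (1 / ((2*n+1:ℕ) + 1 : ℝ)) ^ m) := by
      refine hSo.congr fun k => ?_; push_cast; rw [one_div_pow]; ring_nf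
    exact h1.sub h2
  -- swap integral and sum
  have hswap : ∫ x, (∑' n, f n x) ∂μ = ∑' n, ∫ x, f n x ∂μ := by
    refine integral_tsum hfmeas ?_
    have hlin : ∀ n : ℕ, ∫⁻ x, ‖f n x‖ₑ ∂μ = ENNReal.ofReal
        ((1 / ((2*n:ℕ) + 1 : ℝ)) ^ m - (1 / ((2*n+1:ℕ) + 1 : ℝ)) ^ m) := by
      intro n
      rw [← hfval n, ofReal_integral_eq_lintegral_ofReal (hfint n) (hfnn n)]
      refine lintegral_congr_ae ?_
      filter_upwards [hfnn n] with x hx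
      rw [Real.enorm_eq_ofReal hx]
    simp_rw [hlin]
    rw [← ENNReal.ofReal_tsum_of_nonneg hval_nonneg hvalsummable]
    exact ENNReal.ofReal_ne_top
  -- the integrand equals the sum a.e.
  have hpt : (fun x : Fin m → ℝ => 1 / (1 + ∏ i, x i)) =ᵐ[μ] fun x => ∑' n, f n x := by
    filter_upwards [ae_restrict_mem hcube] with x hx
    obtain ⟨h0, h1⟩ := hprodmem x hx
    exact (geom_series _ h0 h1).symm
  rw [integral_congr_ae hpt, hswap]
  simp_rw [hfval]
  -- now pure series manipulation
  have hSe' : Summable (fun k : ℕ => 1 / (((2*k:ℕ):ℝ) + 1) ^ m) :=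
    hSe.congr fun k => by first | (push_cast; ring_nf) | push_cast | ring_nf
  have hSo' : Summable (fun k : ℕ => 1 / (((2*k+1:ℕ):ℝ) + 1) ^ m) :=
    hSo.congr fun k => by first | (push_cast; ring_nf) | push_cast | ring_nf
  have heo : (∑' k : ℕ, 1 / (((2*k:ℕ):ℝ) + 1) ^ m)
      + ∑' k : ℕ, 1 / (((2*k+1:ℕ):ℝ) + 1) ^ m = ∑' n : ℕ, 1 / ((n:ℝ) + 1) ^ m :=
    tsum_even_add_odd (f := fun n : ℕ => 1 / ((n:ℝ) + 1) ^ m) hSe' hSo'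
  have hB : ∑' k : ℕ, 1 / (((2*k+1:ℕ):ℝ) + 1) ^ m
      = (2:ℝ)⁻¹ ^ m * ∑' n : ℕ, 1 / ((n:ℝ) + 1) ^ m := by
    rw [← tsum_mul_left]
    refine tsum_congr fun k => ?_
    push_cast
    have h2 : (2*(k:ℝ) + 1 + 1) = 2 * ((k:ℝ) + 1) := by ring
    have hk : ((k:ℝ) + 1) ≠ 0 := by positivity
    rw [h2, mul_pow]
    field_simp
    rw [← mul_pow]; norm_num
  have hAB : ∑' n : ℕ, ((1 / (((2*n:ℕ):ℝ) + 1)) ^ m - (1 / (((2*n+1:ℕ):ℝ) + 1)) ^ m)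
      = (∑' k : ℕ, 1 / (((2*k:ℕ):ℝ) + 1) ^ m)
        - ∑' k : ℕ, 1 / (((2*k+1:ℕ):ℝ) + 1) ^ m := by
    rw [← Summable.tsum_sub hSe' hSo']
    exact tsum_congr fun n => by rw [one_div_pow, one_div_pow]
  rw [hAB]
  have hA : ∑' k : ℕ, 1 / (((2*k:ℕ):ℝ) + 1) ^ m
      = (∑' n : ℕ, 1 / ((n:ℝ) + 1) ^ m)
        - (2:ℝ)⁻¹ ^ m * ∑' n : ℕ, 1 / ((n:ℝ) + 1) ^ m := by
    rw [← hB] at *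
    linarith
  rw [hA, hB]
  have h2m : (2:ℝ) ^ ((1:ℝ) - m) = 2 * ((2:ℝ)⁻¹) ^ m := by
    rw [Real.rpow_sub (by norm_num), Real.rpow_one, Real.rpow_natCast, inv_pow]
    ring
  rw [h2m]
  ring

end CubeIntegralEta

theorem cube_integral_eta (m : ℕ) (hm : 2 ≤ m) :
    (∫ x : Fin m → ℝ in Set.univ.pi (fun _ => Set.Ioo (0:ℝ) 1),
      1 / (1 + ∏ i, x i))
    = (1 - 2 ^ ((1:ℝ) - m)) * ∑' n : ℕ, 1 / ((n:ℝ) + 1) ^ m :=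
  CubeIntegralEta.main m hm
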